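/- For every n ≥ 3 and any two distinct vectors a, b ∈ V_n with Q_0(a) = Q_0(b) = 0, the intersection H_a ∩ H_b has exactly 4^{n−1} + 2^{n−1} − 1 points. -/

import Mathlib

/-- The symplectic vector space `V_n = (ZMod 2)^(2n)` of the n-qubit real Pauli group. -/
abbrev V (n : ℕ) : Type := Fin (2 * n) → ZMod 2

/-- The index `2i-1` (0-based: `2i`). -/
def i0 {n : ℕ} (i : Fin n) : Fin (2 * n) := ⟨2 * i.1, by have := i.isLt; omega⟩

/-- The index `2i` (0-based: `2i+1`). -/
def i1 {n : ℕ} (i : Fin n) : Fin (2 * n) := ⟨2 * i.1 + 1, by have := i.isLt; omega⟩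

/-- The symplectic form `⟨x,y⟩ = Σ_{i=1}^n (x_{2i−1} y_{2i} + x_{2i} y_{2i−1})`. -/
def sform {n : ℕ} (x y : V n) : ZMod 2 :=
  ∑ i : Fin n, (x (i0 i) * y (i1 i) + x (i1 i) * y (i0 i))

/-- The point set `P = V_n \ {0}` of the incidence geometry `G_n`. -/
def P (n : ℕ) : Set (V n) := {x | x ≠ 0}

/-- The line set `L = {{a,b,a+b} : a,b ∈ P, a ≠ b, ⟨a,b⟩ = 0}` of `G_n`. -/
def Lines (n : ℕ) : Set (Set (V n)) :=
  {l | ∃ a b : V n, a ∈ P n ∧ b ∈ P n ∧ a ≠ b ∧ sform a b = 0 ∧ l = {a, b, a + b}}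

/-- A subset `H ⊆ P` satisfies condition (H1) if every line meets it in exactly
one point or is contained in it. -/
def IsH1 {n : ℕ} (H : Set (V n)) : Prop :=
  H ⊆ P n ∧ ∀ l ∈ Lines n, (H ∩ l).ncard = 1 ∨ l ⊆ H

/-- A geometric hyperplane: a subset satisfying (H1) which is not the full point set. -/
def IsHyperplane {n : ℕ} (H : Set (V n)) : Prop := IsH1 H ∧ H ≠ P n

/-- `A ⊞ B`: the complement in `P` of the symmetric difference of `A` and `B`. -/
def boxAdd {n : ℕ} (A B : Set (V n)) : Set (V n) := P n \ (symmDiff A B)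

/-- The quadratic form `Q_0(x) = Σ_{i=1}^n x_{2i−1} x_{2i}`. -/
def Q0 {n : ℕ} (x : V n) : ZMod 2 := ∑ i : Fin n, x (i0 i) * x (i1 i)

/-- The quadratic form `Q_p(x) = Q_0(x) + ⟨p,x⟩`. -/
def Qf {n : ℕ} (p x : V n) : ZMod 2 := Q0 x + sform p x

/-- The perp-set hyperplane `C_p = {x ∈ P : ⟨p,x⟩ = 0}`. -/
def Cset {n : ℕ} (p : V n) : Set (V n) := {x ∈ P n | sform p x = 0}

/-- The quadric hyperplane `H_p = {x ∈ P : Q_p(x) = 0}`. -/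
def Hset {n : ℕ} (p : V n) : Set (V n) := {x ∈ P n | Qf p x = 0}

/-- The symplectic transvection `t_p : x ↦ x + ⟨p,x⟩·p`. -/
def tv {n : ℕ} (p : V n) (x : V n) : V n := x + sform p x • p


def chi (u : ZMod 2) : ℤ := if u = 0 then 1 else -1

lemma chi_add : ∀ u v : ZMod 2, chi (u + v) = chi u * chi v := by decide

lemma chi_sum {ι : Type*} (s : Finset ι) (f : ι → ZMod 2) :
    chi (∑ i ∈ s, f i) = ∏ i ∈ s, chi (f i) := by
  induction s using Finset.cons_induction with
  | empty => simp [chi]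
  | cons a s h ih => rw [Finset.sum_cons, Finset.prod_cons, chi_add, ih]

def pairEquiv (n : ℕ) : (Fin n → ZMod 2 × ZMod 2) ≃ V n where
  toFun g := fun j => if j.1 % 2 = 0 then (g ⟨j.1 / 2, by have := j.isLt; omega⟩).1
    else (g ⟨j.1 / 2, by have := j.isLt; omega⟩).2
  invFun x := fun i => (x (i0 i), x (i1 i))
  left_inv g := by
    funext i
    have h2 : (2 * i.1 + 1) / 2 = i.1 := by omega
    refine Prod.ext ?_ ?_ <;>
      simp [i0, i1, Nat.mul_mod_right, Nat.mul_div_cancel_left, Nat.mul_add_mod, h2]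
  right_inv x := by
    funext j
    by_cases h : j.1 % 2 = 0
    · simp only [h, if_true]
      congr 1
      exact Fin.ext (by simp [i0]; omega)
    · simp only [h, if_false]
      congr 1
      exact Fin.ext (by simp [i1]; omega)

lemma pairEquiv_i0 {n : ℕ} (g : Fin n → ZMod 2 × ZMod 2) (i : Fin n) :
    pairEquiv n g (i0 i) = (g i).1 := by
  simp [pairEquiv, i0, Nat.mul_mod_right, Nat.mul_div_cancel_left]

lemma pairEquiv_i1 {n : ℕ} (g : Fin n → ZMod 2 × ZMod 2) (i : Fin n) :
    pairEquiv n g (i1 i) = (g i).2 := by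
  have h2 : (2 * i.1 + 1) / 2 = i.1 := by omega
  simp [pairEquiv, i1, Nat.mul_add_mod, h2]

lemma sum_chi_pair : ∑ p : ZMod 2 × ZMod 2, chi (p.1 * p.2) = 2 := by decide

lemma sum_chi_Q0 (n : ℕ) : ∑ x : V n, chi (Q0 x) = 2 ^ n := by
  calc ∑ x : V n, chi (Q0 x)
      = ∑ g : Fin n → ZMod 2 × ZMod 2, chi (Q0 (pairEquiv n g)) :=
        ((pairEquiv n).sum_comp (fun x => chi (Q0 x))).symm
    _ = ∑ g : Fin n → ZMod 2 × ZMod 2, ∏ i : Fin n, chi ((g i).1 * (g i).2) := by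
        refine Finset.sum_congr rfl fun g _ => ?_
        rw [Q0, chi_sum]
        simp [pairEquiv_i0, pairEquiv_i1]
    _ = ∏ _i : Fin n, ∑ p : ZMod 2 × ZMod 2, chi (p.1 * p.2) :=
        by rw [Fintype.prod_sum]
    _ = 2 ^ n := by simp [sum_chi_pair]

lemma sform_add_right {n : ℕ} (c x y : V n) :
    sform c (x + y) = sform c x + sform c y := by
  rw [sform, sform, sform, ← Finset.sum_add_distrib]
  exact Finset.sum_congr rfl fun i _ => by simp [Pi.add_apply]; ring

lemma sform_add_left {n : ℕ} (a b x : V n) :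
    sform (a + b) x = sform a x + sform b x := by
  rw [sform, sform, sform, ← Finset.sum_add_distrib]
  exact Finset.sum_congr rfl fun i _ => by simp [Pi.add_apply]; ring

lemma Q0_add {n : ℕ} (x a : V n) :
    Q0 (x + a) = Q0 x + Q0 a + sform a x := by
  rw [Q0, Q0, Q0, sform, ← Finset.sum_add_distrib, ← Finset.sum_add_distrib]
  exact Finset.sum_congr rfl fun i _ => by simp [Pi.add_apply]; ring

lemma i0_inj {n : ℕ} {i j : Fin n} (h : i0 i = i0 j) : i = j := by
  have := Fin.val_eq_of_eq h; simp [i0] at this; exact Fin.ext (by omega)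

lemma i1_inj {n : ℕ} {i j : Fin n} (h : i1 i = i1 j) : i = j := by
  have := Fin.val_eq_of_eq h; simp [i1] at this; exact Fin.ext (by omega)

lemma i0_ne_i1 {n : ℕ} (i j : Fin n) : i0 i ≠ i1 j := by
  intro h; have := Fin.val_eq_of_eq h; simp [i0, i1] at this; omega

lemma sform_single_i1 {n : ℕ} (c : V n) (i : Fin n) :
    sform c (Pi.single (i1 i) 1) = c (i0 i) := by
  rw [sform]
  rw [Finset.sum_eq_single i]
  · simp [Pi.single_apply, (i0_ne_i1 i i).symm]
  · intro j _ hj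
    have h1 : i1 j ≠ i1 i := fun h => hj (i1_inj h)
    simp [Pi.single_apply, h1, (i0_ne_i1 j i).symm]
  · simp

lemma sform_single_i0 {n : ℕ} (c : V n) (i : Fin n) :
    sform c (Pi.single (i0 i) 1) = c (i1 i) := by
  rw [sform]
  rw [Finset.sum_eq_single i]
  · simp [Pi.single_apply, i0_ne_i1 i i]
  · intro j _ hj
    have h1 : i0 j ≠ i0 i := fun h => hj (i0_inj h)
    simp [Pi.single_apply, h1, i0_ne_i1 j i, (i0_ne_i1 i j).symm]
  · simp

lemma zmod2_ne_zero : ∀ u : ZMod 2, u ≠ 0 → u = 1 := by decide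

lemma chi_add_one : ∀ u : ZMod 2, chi (u + 1) = -chi u := by decide

lemma sum_chi_sform {n : ℕ} (c : V n) (hc : c ≠ 0) :
    ∑ x : V n, chi (sform c x) = 0 := by
  obtain ⟨j, hj⟩ : ∃ j, c j ≠ 0 := by
    by_contra h; push_neg at h; exact hc (funext fun j => h j)
  have hj1 : c j = 1 := zmod2_ne_zero _ hj
  obtain ⟨e, he⟩ : ∃ e : V n, sform c e = 1 := by
    by_cases h : j.1 % 2 = 0
    · refine ⟨Pi.single (i1 ⟨j.1 / 2, by have := j.isLt; omega⟩) 1, ?_⟩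
      rw [sform_single_i1]
      have : i0 (⟨j.1 / 2, by have := j.isLt; omega⟩ : Fin n) = j :=
        Fin.ext (by simp [i0]; omega)
      rw [this, hj1]
    · refine ⟨Pi.single (i0 ⟨j.1 / 2, by have := j.isLt; omega⟩) 1, ?_⟩
      rw [sform_single_i0]
      have : i1 (⟨j.1 / 2, by have := j.isLt; omega⟩ : Fin n) = j :=
        Fin.ext (by simp [i1]; omega)
      rw [this, hj1]
  have key : ∑ x : V n, chi (sform c x) = ∑ x : V n, chi (sform c (x + e)) :=
    (Fintype.sum_equiv (Equiv.addRight e) (fun x => chi (sform c (x + e)))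
      (fun x => chi (sform c x)) (fun x => rfl)).symm
  have key2 : ∑ x : V n, chi (sform c (x + e)) = -∑ x : V n, chi (sform c x) := by
    rw [← Finset.sum_neg_distrib]
    exact Finset.sum_congr rfl fun x _ => by
      rw [sform_add_right, he, chi_add_one]
  linarith [key, key2]

lemma prod_expand : ∀ u v : ZMod 2,
    (1 + chi u) * (1 + chi v) = if u = 0 ∧ v = 0 then 4 else 0 := by decide

lemma zmod2_add_self : ∀ u : ZMod 2, u + u = 0 := by decide

lemma zmod2_add_eq_zero : ∀ u v : ZMod 2, u + v = 0 → u = v := by decide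

theorem stmt18 (n : ℕ) (hn : 3 ≤ n) (a b : V n) (hab : a ≠ b)
    (ha : Q0 a = 0) (hb : Q0 b = 0) :
    (Hset a ∩ Hset b).ncard = 4 ^ (n - 1) + 2 ^ (n - 1) - 1 := by
  set T : Finset (V n) := Finset.univ.filter (fun x => Qf a x = 0 ∧ Qf b x = 0) with hT
  have hset : Hset a ∩ Hset b = ↑(T.erase 0) := by
    ext x
    simp only [Hset, P, Set.mem_inter_iff, Set.mem_setOf_eq, Finset.coe_erase,
      Set.mem_diff, Finset.mem_coe, hT, Finset.mem_filter, Finset.mem_univ, true_and,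
      Set.mem_singleton_iff]
    tauto
  have h0T : (0 : V n) ∈ T := by rw [hT, Finset.mem_filter]; simp [Qf, Q0, sform]
  have habne : a + b ≠ 0 := fun h =>
    hab (funext fun j => zmod2_add_eq_zero _ _ (congrFun h j))
  have expand1 : ∑ x : V n, (1 + chi (Qf a x)) * (1 + chi (Qf b x)) = 4 * T.card := by
    rw [Finset.sum_congr rfl (fun x _ => prod_expand (Qf a x) (Qf b x))]
    rw [Finset.sum_ite, Finset.sum_const, Finset.sum_const_zero, add_zero, hT]
    simp [mul_comm]
  have sumA : ∀ c : V n, Q0 c = 0 → ∑ x : V n, chi (Qf c x) = 2 ^ n := by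
    intro c hc
    have h1 : ∀ x : V n, Qf c x = Q0 (x + c) := fun x => by
      rw [Q0_add, hc, Qf]; ring
    rw [Finset.sum_congr rfl (fun x _ => by rw [h1 x])]
    rw [Fintype.sum_equiv (Equiv.addRight c) (fun x => chi (Q0 (x + c)))
      (fun y => chi (Q0 y)) (fun x => rfl)]
    exact sum_chi_Q0 n
  have sumAB : ∑ x : V n, chi (Qf a x) * chi (Qf b x) = 0 := by
    have h1 : ∀ x : V n, chi (Qf a x) * chi (Qf b x) = chi (sform (a + b) x) := by
      intro x
      rw [← chi_add]
      congr 1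
      rw [Qf, Qf, sform_add_left]
      linear_combination zmod2_add_self (Q0 x)
    rw [Finset.sum_congr rfl (fun x _ => h1 x)]
    exact sum_chi_sform (a + b) habne
  have expand2 : ∑ x : V n, (1 + chi (Qf a x)) * (1 + chi (Qf b x))
      = 2 ^ (2 * n) + 2 ^ n + 2 ^ n := by
    have h1 : ∀ x : V n, (1 + chi (Qf a x)) * (1 + chi (Qf b x))
        = 1 + chi (Qf a x) + chi (Qf b x) + chi (Qf a x) * chi (Qf b x) :=
      fun x => by ring
    rw [Finset.sum_congr rfl (fun x _ => h1 x), Finset.sum_add_distrib,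
      Finset.sum_add_distrib, Finset.sum_add_distrib, sumA a ha, sumA b hb, sumAB,
      add_zero, Finset.sum_const, Finset.card_univ]
    have hcard : Fintype.card (V n) = 2 ^ (2 * n) := by
      rw [Fintype.card_fun]; simp
    rw [hcard]
    ring
  obtain ⟨m, rfl⟩ : ∃ m, n = m + 1 := ⟨n - 1, by omega⟩
  have hm : m + 1 - 1 = m := by omega
  have hcardZ : (T.card : ℤ) = 4 ^ m + 2 ^ m := by
    have h4 : (4 : ℤ) * T.card = 4 * (4 ^ m + 2 ^ m) := by
      rw [← expand1, expand2, show (4:ℤ) = 2 ^ 2 by norm_num, ← pow_mul]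
      ring
    linarith
  have hcardN : T.card = 4 ^ m + 2 ^ m := by exact_mod_cast hcardZ
  rw [hset, Set.ncard_coe_finset, Finset.card_erase_of_mem h0T, hcardN, hm]
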